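/- arXiv:math/9904085 — 2 statements merged into one kernel-verified Lean document; each statement's English description precedes it below -/
import Mathlib

section
/- Let P(X,x) = Σ_{j=0}^J a_j(x) X^j with a_j ∈ ℂ⟦x₁,…,x_m⟧ and a_J not identically zero. Then there exists a positive integer m(P) such that: whenever h, h' ∈ ℂ⟦x⟧ satisfy P(h(x),x) = 0, P(h'(x),x) = 0, and ∂^α h(0) = ∂^α h'(0) for all multi-indices |α| ≤ m(P), it follows that h = h' as formal power series. -/
noncomputable section

/-- Formal substitution: `substPS F g = g ∘ F`, well-defined (agreeing with the usual
substitution) when each `F j` has zero constant term. -/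
noncomputable def substPS {σ τ : Type*} [Fintype σ] [DecidableEq σ]
    (F : σ → MvPowerSeries τ ℂ) (g : MvPowerSeries σ ℂ) : MvPowerSeries τ ℂ :=
  fun d =>
    MvPowerSeries.coeff (R := ℂ) d
      ((MvPolynomial.aeval F)
        (MvPowerSeries.trunc ℂ
          (Finsupp.equivFunOnFinite.symm fun _ => (d.sum fun _ v => v) + 1) g))

/-- Formal partial derivative of a multivariate formal power series. -/
noncomputable def pderivPS {σ : Type*} (i : σ) (f : MvPowerSeries σ ℂ) : MvPowerSeries σ ℂ :=
  fun d => ((d i : ℂ) + 1) * MvPowerSeries.coeff (R := ℂ) (d + Finsupp.single i 1) f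

/-- Setting the second group of variables equal to `0` in a formal power series. -/
noncomputable def setSnd0 {A B : Type*} (f : MvPowerSeries (A ⊕ B) ℂ) : MvPowerSeries A ℂ :=
  fun d => MvPowerSeries.coeff (R := ℂ) (Finsupp.mapDomain Sum.inl d) f

/-- A formal power series is convergent iff its coefficients grow at most geometrically. -/
def IsConvergentPS {σ : Type*} (f : MvPowerSeries σ ℂ) : Prop :=
  ∃ C r : ℝ, 0 < r ∧ ∀ d : σ →₀ ℕ, ‖MvPowerSeries.coeff (R := ℂ) d f‖ ≤ C * r ^ (d.sum fun _ v => v)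

end

open MvPowerSeries in
/-- Lemma 4.3. -/
theorem stmt_6 (m J : ℕ) (a : Fin (J + 1) → MvPowerSeries (Fin m) ℂ)
    (haJ : a (Fin.last J) ≠ 0) :
    ∃ mP : ℕ, 0 < mP ∧
      ∀ h h' : MvPowerSeries (Fin m) ℂ,
        ∑ j : Fin (J + 1), a j * h ^ (j : ℕ) = 0 →
        ∑ j : Fin (J + 1), a j * h' ^ (j : ℕ) = 0 →
        (∀ d : Fin m →₀ ℕ, (d.sum fun _ v => v) ≤ mP →
          coeff (R := ℂ) d h = coeff (R := ℂ) d h') →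
        h = h' := by
  classical
  have : IsDomain (MvPowerSeries (Fin m) ℂ) := NoZeroDivisors.to_isDomain _
  set p : Polynomial (MvPowerSeries (Fin m) ℂ) :=
    ∑ j : Fin (J + 1), Polynomial.C (a j) * Polynomial.X ^ (j : ℕ) with hpdef
  have hcoeff : p.coeff J = a (Fin.last J) := by
    rw [hpdef, Polynomial.finset_sum_coeff]
    rw [Finset.sum_eq_single (Fin.last J)]
    · simp
    · intro b _ hb
      rw [Polynomial.coeff_C_mul, Polynomial.coeff_X_pow, if_neg, mul_zero]
      intro hbJ
      exact hb (by ext; simp [hbJ])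
    · simp
  have hp : p ≠ 0 := fun hz => haJ (by rw [← hcoeff, hz, Polynomial.coeff_zero])
  have heval : ∀ h : MvPowerSeries (Fin m) ℂ,
      p.eval h = ∑ j : Fin (J + 1), a j * h ^ (j : ℕ) := by
    intro h
    rw [hpdef, Polynomial.eval_finset_sum]
    simp
  have hfin : Set.Finite {x : MvPowerSeries (Fin m) ℂ | p.IsRoot x} :=
    Polynomial.finite_setOf_isRoot hp
  set t := hfin.toFinset with ht
  have hex : ∀ x y : MvPowerSeries (Fin m) ℂ, x ≠ y →
      ∃ d : Fin m →₀ ℕ, coeff (R := ℂ) d x ≠ coeff (R := ℂ) d y := by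
    intro x y hxy
    by_contra hc
    push_neg at hc
    exact hxy (MvPowerSeries.ext hc)
  set N : MvPowerSeries (Fin m) ℂ → MvPowerSeries (Fin m) ℂ → ℕ := fun x y =>
    if hxy : x = y then 0 else ((hex x y hxy).choose.sum fun _ v => v) with hN
  refine ⟨1 + (t ×ˢ t).sup (fun q => N q.1 q.2), by omega, ?_⟩
  intro h h' hroot hroot' hagree
  by_contra hne
  have hd := (hex h h' hne).choose_spec
  have hht : h ∈ t := by
    rw [ht, Set.Finite.mem_toFinset]
    show p.IsRoot h
    rw [Polynomial.IsRoot, heval h, hroot]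
  have hht' : h' ∈ t := by
    rw [ht, Set.Finite.mem_toFinset]
    show p.IsRoot h'
    rw [Polynomial.IsRoot, heval h', hroot']
  have hle : N h h' ≤ (t ×ˢ t).sup (fun q => N q.1 q.2) :=
    Finset.le_sup (f := fun q => N q.1 q.2) (Finset.mk_mem_product hht hht')
  have hNe : N h h' = ((hex h h' hne).choose.sum fun _ v => v) := dif_neg hne
  exact hd (hagree _ (by omega))
end

section
/- Let Q'(s,χ) ∈ ℂ⟦s₁,…,s_{n'}, χ₁,…,χ_{n'}⟧ be a formal power series, written Q'(s,χ) = Σ_α Q'_α(s) χ^α over multi-indices α ∈ ℤ₊^{n'}. Suppose the ideal generated by all coefficients Q'_α in ℂ⟦s⟧ has finite codimension (essential finiteness), and suppose μ : (ℂ,0) → (ℂ^{n'},0) is a formal curve with μ ≢ 0. Then Q'_α(μ(t)) is not identically zero for some α; i.e., the power series Σ_α Q'_α(μ(t)) χ^α in ℂ⟦t,χ⟧ is nonzero. -/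
open MvPowerSeries

section Aux

variable {σ τ : Type*} [Fintype σ] [DecidableEq σ] [DecidableEq τ]

lemma degSum_add (a b : τ →₀ ℕ) :
    ((a + b).sum fun _ v => v) = (a.sum fun _ v => v) + (b.sum fun _ v => v) :=
  Finsupp.sum_add_index' (fun _ => rfl) (fun _ _ _ => rfl)

lemma apply_le_degSum (e : τ →₀ ℕ) (j : τ) : e j ≤ e.sum fun _ v => v := by
  by_cases h : j ∈ e.support
  · exact Finset.single_le_sum (fun _ _ => Nat.zero_le _) h
  · simp [Finsupp.notMem_support_iff.mp h]

lemma degSum_eq_zero_iff (e : τ →₀ ℕ) : (e.sum fun _ v => v) = 0 ↔ e = 0 := by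
  constructor
  · intro h
    ext j
    have := apply_le_degSum e j
    simp only [Finsupp.coe_zero, Pi.zero_apply]
    omega
  · rintro rfl; simp

lemma coeff_multiset_prod_eq_zero (m : Multiset (MvPowerSeries τ ℂ))
    (h : ∀ f ∈ m, constantCoeff (σ := τ) (R := ℂ) f = 0) (d : τ →₀ ℕ)
    (hd : (d.sum fun _ v => v) < Multiset.card m) :
    MvPowerSeries.coeff (R := ℂ) d m.prod = 0 := by
  induction m using Multiset.induction generalizing d with
  | empty => simp at hd
  | cons a m ih =>
    rw [Multiset.prod_cons, MvPowerSeries.coeff_mul]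
    refine Finset.sum_eq_zero fun p hp => ?_
    rw [Finset.HasAntidiagonal.mem_antidiagonal] at hp
    by_cases h1 : p.1 = 0
    · have : MvPowerSeries.coeff (R := ℂ) p.1 a = 0 := by
        rw [h1, MvPowerSeries.coeff_zero_eq_constantCoeff]
        exact h a (Multiset.mem_cons_self _ _)
      rw [this, zero_mul]
    · have hs : (p.2.sum fun _ v => v) < Multiset.card m := by
        have h2 := degSum_add p.1 p.2
        rw [hp] at h2
        have h3 : (p.1.sum fun _ v => v) ≠ 0 := fun hc => h1 ((degSum_eq_zero_iff p.1).mp hc)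
        rw [Multiset.card_cons] at hd
        omega
      rw [ih (fun f hf => h f (Multiset.mem_cons_of_mem hf)) p.2 hs, mul_zero]

lemma coeff_finsupp_prod_pow_eq_zero {τ' : Type*} (F : τ' → MvPowerSeries τ ℂ)
    (hF : ∀ j, constantCoeff (σ := τ) (R := ℂ) (F j) = 0) (e : τ' →₀ ℕ) (d : τ →₀ ℕ)
    (hd : (d.sum fun _ v => v) < e.sum fun _ v => v) :
    MvPowerSeries.coeff (R := ℂ) d (e.prod fun j n => F j ^ n) = 0 := by
  have hprod : (Finsupp.mapDomain F e).toMultiset.prod = e.prod fun j n => F j ^ n := by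
    rw [Finsupp.prod_toMultiset,
      Finsupp.prod_mapDomain_index (fun a => pow_zero a) (fun a b c => pow_add a b c)]
  have hcard : Multiset.card (Finsupp.mapDomain F e).toMultiset = e.sum fun _ v => v := by
    rw [Finsupp.card_toMultiset,
      Finsupp.sum_mapDomain_index (fun _ => rfl) (fun _ _ _ => rfl)]
    rfl
  rw [← hprod]
  apply coeff_multiset_prod_eq_zero
  · intro f hf
    classical
    rw [Finsupp.mem_toMultiset] at hf
    obtain ⟨j, _, rfl⟩ := Finset.mem_image.mp (Finsupp.mapDomain_support hf)
    exact hF j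
  · rw [hcard]; exact hd

lemma coeff_aeval_eq_zero (F : σ → MvPowerSeries τ ℂ)
    (hF : ∀ j, constantCoeff (σ := τ) (R := ℂ) (F j) = 0) (P : MvPolynomial σ ℂ) (d : τ →₀ ℕ)
    (hP : ∀ e ∈ P.support, (d.sum fun _ v => v) < e.sum fun _ v => v) :
    MvPowerSeries.coeff (R := ℂ) d (MvPolynomial.aeval F P) = 0 := by
  rw [P.as_sum, map_sum, map_sum]
  refine Finset.sum_eq_zero fun e he => ?_
  rw [MvPolynomial.aeval_monomial, ← c_eq_algebraMap, MvPowerSeries.coeff_C_mul,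
    coeff_finsupp_prod_pow_eq_zero F hF e d (hP e he), mul_zero]

lemma coeff_aeval_congr (F : σ → MvPowerSeries τ ℂ)
    (hF : ∀ j, constantCoeff (σ := τ) (R := ℂ) (F j) = 0) {P Q : MvPolynomial σ ℂ} (d : τ →₀ ℕ)
    (h : ∀ e : σ →₀ ℕ, (e.sum fun _ v => v) ≤ (d.sum fun _ v => v) → P.coeff e = Q.coeff e) :
    MvPowerSeries.coeff (R := ℂ) d (MvPolynomial.aeval F P) =
      MvPowerSeries.coeff (R := ℂ) d (MvPolynomial.aeval F Q) := by
  have h0 : MvPowerSeries.coeff (R := ℂ) d (MvPolynomial.aeval F (P - Q)) = 0 := by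
    apply coeff_aeval_eq_zero F hF _ d
    intro e he
    rw [MvPolynomial.mem_support_iff, MvPolynomial.coeff_sub, sub_ne_zero] at he
    by_contra hc
    exact he (h e (by omega))
  rw [map_sub, map_sub, sub_eq_zero] at h0
  exact h0

variable [Nonempty σ]

lemma lt_const (d : τ →₀ ℕ) (e : σ →₀ ℕ) (k : ℕ)
    (hk : (d.sum fun _ v => v) ≤ k)
    (he : (e.sum fun _ v => v) ≤ (d.sum fun _ v => v)) :
    e < (Finsupp.equivFunOnFinite.symm fun _ => k + 1 : σ →₀ ℕ) := by
  have hval : ∀ j : σ, (Finsupp.equivFunOnFinite.symm fun _ => k + 1 : σ →₀ ℕ) j = k + 1 :=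
    fun j => rfl
  constructor
  · intro j
    have := apply_le_degSum e j
    rw [hval j]
    omega
  · intro hle
    obtain ⟨j⟩ := ‹Nonempty σ›
    have h1 := hle j
    have := apply_le_degSum e j
    rw [hval j] at h1
    omega

/-- A bound dominating all multi-indices of total degree at most that of `d`. -/
lemma exists_dom (d : τ →₀ ℕ) :
    ∃ N : σ →₀ ℕ, ∀ e : σ →₀ ℕ, (e.sum fun _ v => v) ≤ (d.sum fun _ v => v) → e < N :=
  ⟨_, fun e he => lt_const d e _ le_rfl he⟩

/-- Key stability lemma: the coefficient of `substPS F g` at `d` equals the coefficient of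
`aeval F (trunc N g)` for any `N` dominating total degree `d.sum`. -/
lemma coeff_substPS (F : σ → MvPowerSeries τ ℂ)
    (hF : ∀ j, constantCoeff (σ := τ) (R := ℂ) (F j) = 0) (g : MvPowerSeries σ ℂ) (d : τ →₀ ℕ)
    (N : σ →₀ ℕ)
    (hN : ∀ e : σ →₀ ℕ, (e.sum fun _ v => v) ≤ (d.sum fun _ v => v) → e < N) :
    MvPowerSeries.coeff (R := ℂ) d (substPS F g) =
      MvPowerSeries.coeff (R := ℂ) d (MvPolynomial.aeval F (trunc ℂ N g)) := by
  have h0' : MvPowerSeries.coeff (R := ℂ) d (substPS F g) = substPS F g d :=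
    MvPowerSeries.coeff_apply (substPS F g) d
  have h0 : substPS F g d =
      MvPowerSeries.coeff (R := ℂ) d (MvPolynomial.aeval F (trunc ℂ
        (Finsupp.equivFunOnFinite.symm fun _ => (d.sum fun _ v => v) + 1) g)) := rfl
  refine (h0'.trans h0).trans (coeff_aeval_congr F hF d fun e he => ?_)
  rw [coeff_trunc, coeff_trunc, if_pos (lt_const d e _ le_rfl he), if_pos (hN e he)]

lemma substPS_coe (F : σ → MvPowerSeries τ ℂ)
    (hF : ∀ j, constantCoeff (σ := τ) (R := ℂ) (F j) = 0) (P : MvPolynomial σ ℂ) :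
    substPS F (↑P : MvPowerSeries σ ℂ) = MvPolynomial.aeval F P := by
  ext d
  obtain ⟨N, hN⟩ := exists_dom (σ := σ) d
  refine (coeff_substPS F hF _ d N hN).trans (coeff_aeval_congr F hF d fun e he => ?_)
  rw [coeff_trunc, if_pos (hN e he), MvPolynomial.coeff_coe]

lemma substPS_add (F : σ → MvPowerSeries τ ℂ)
    (hF : ∀ j, constantCoeff (σ := τ) (R := ℂ) (F j) = 0) (g h : MvPowerSeries σ ℂ) :
    substPS F (g + h) = substPS F g + substPS F h := by
  ext d
  obtain ⟨N, hN⟩ := exists_dom (σ := σ) d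
  have h1 := coeff_substPS F hF (g + h) d N hN
  have h2 := coeff_substPS F hF g d N hN
  have h3 := coeff_substPS F hF h d N hN
  rw [map_add (MvPowerSeries.coeff (R := ℂ) d) (substPS F g), h1, h2, h3,
    map_add (trunc ℂ N) g h, map_add (MvPolynomial.aeval F),
    map_add (MvPowerSeries.coeff (R := ℂ) d)]

lemma substPS_mul (F : σ → MvPowerSeries τ ℂ)
    (hF : ∀ j, constantCoeff (σ := τ) (R := ℂ) (F j) = 0) (g h : MvPowerSeries σ ℂ) :
    substPS F (g * h) = substPS F g * substPS F h := by
  ext d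
  obtain ⟨N, hN⟩ := exists_dom (σ := σ) d
  -- step 1: the coefficient of the product of substitutions
  have h2 : MvPowerSeries.coeff (R := ℂ) d (substPS F g * substPS F h) =
      MvPowerSeries.coeff (R := ℂ) d
        (MvPolynomial.aeval F (trunc ℂ N g) * MvPolynomial.aeval F (trunc ℂ N h)) := by
    refine (MvPowerSeries.coeff_mul d (substPS F g) (substPS F h)).trans
      (Eq.trans ?_ (MvPowerSeries.coeff_mul d _ _).symm)
    refine Finset.sum_congr rfl fun p hp => ?_
    rw [Finset.HasAntidiagonal.mem_antidiagonal] at hp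
    have hps : (p.1.sum fun _ v => v) + (p.2.sum fun _ v => v) = d.sum fun _ v => v := by
      rw [← degSum_add, hp]
    rw [coeff_substPS F hF g p.1 N (fun e he => hN e (by omega)),
      coeff_substPS F hF h p.2 N (fun e he => hN e (by omega))]
  refine (coeff_substPS F hF (g * h) d N hN).trans (Eq.trans ?_ h2.symm)
  have h3 : MvPolynomial.aeval F (trunc ℂ N g) * MvPolynomial.aeval F (trunc ℂ N h) =
      MvPolynomial.aeval F (trunc ℂ N g * trunc ℂ N h) := (map_mul _ _ _).symm
  refine Eq.trans ?_ (congrArg (MvPowerSeries.coeff (R := ℂ) d) h3).symm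
  refine coeff_aeval_congr F hF d fun e he => ?_
  -- coefficients of `trunc N (g*h)` and `trunc N g * trunc N h` agree in low degree
  have h4 : (trunc ℂ N (g * h)).coeff e = MvPowerSeries.coeff (R := ℂ) e (g * h) := by
    rw [coeff_trunc, if_pos (hN e he)]
  refine h4.trans (Eq.trans ((MvPowerSeries.coeff_mul e g h).trans ?_)
    (MvPolynomial.coeff_mul (trunc ℂ N g) (trunc ℂ N h) e).symm)
  refine Finset.sum_congr rfl fun p hp => ?_
  rw [Finset.HasAntidiagonal.mem_antidiagonal] at hp
  have hps : (p.1.sum fun _ v => v) + (p.2.sum fun _ v => v) = e.sum fun _ v => v := by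
    rw [← degSum_add, hp]
  have hle := he
  rw [coeff_trunc, coeff_trunc, if_pos (hN p.1 (by omega)), if_pos (hN p.2 (by omega))]

/-- `substPS F` bundled as a `ℂ`-algebra homomorphism. -/
noncomputable def substAlgHom (F : σ → MvPowerSeries τ ℂ)
    (hF : ∀ j, constantCoeff (σ := τ) (R := ℂ) (F j) = 0) :
    MvPowerSeries σ ℂ →ₐ[ℂ] MvPowerSeries τ ℂ where
  toFun := substPS F
  map_one' := by
    have h := substPS_coe F hF 1
    rwa [MvPolynomial.coe_one, map_one] at h
  map_mul' := substPS_mul F hF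
  map_zero' := by
    have h := substPS_coe F hF 0
    rwa [MvPolynomial.coe_zero, map_zero] at h
  map_add' := substPS_add F hF
  commutes' := fun c => by
    have h := substPS_coe F hF (MvPolynomial.C c)
    rwa [MvPolynomial.coe_C, MvPolynomial.aeval_C, MvPowerSeries.c_eq_algebraMap] at h

lemma substAlgHom_X (F : σ → MvPowerSeries τ ℂ)
    (hF : ∀ j, constantCoeff (σ := τ) (R := ℂ) (F j) = 0) (i : σ) :
    substAlgHom F hF (MvPowerSeries.X i) = F i := by
  have h := substPS_coe F hF (MvPolynomial.X i)
  rwa [MvPolynomial.coe_X, MvPolynomial.aeval_X] at h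

end Aux

open MvPowerSeries in
/-- essential finiteness obstructs formal curves in the zero set of
the coefficient ideal.  `Qc α` is the coefficient series `Q'_α(s)` of `χ^α`. -/
theorem stmt_15 (n' : ℕ) (Qc : (Fin n' →₀ ℕ) → MvPowerSeries (Fin n') ℂ)
    (hfin : FiniteDimensional ℂ
      (MvPowerSeries (Fin n') ℂ ⧸ Ideal.span (Set.range Qc)))
    (μ : Fin n' → MvPowerSeries Unit ℂ)
    (hμ0 : ∀ i, constantCoeff (σ := _) (R := ℂ) (μ i) = 0) (hμ : μ ≠ 0) :
    ∃ α : Fin n' →₀ ℕ, substPS μ (Qc α) ≠ 0 := by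
  rcases Nat.eq_zero_or_pos n' with hn | hn
  · subst hn
    exact absurd (funext fun i => i.elim0) hμ
  haveI : Nonempty (Fin n') := ⟨⟨0, hn⟩⟩
  by_contra hcon
  push_neg at hcon
  -- pick i with μ i ≠ 0
  obtain ⟨i, hi⟩ : ∃ i, μ i ≠ 0 := by
    by_contra hc
    push_neg at hc
    exact hμ (funext hc)
  set I := Ideal.span (Set.range Qc) with hI
  set φ := substAlgHom μ hμ0 with hφ
  -- the ideal is contained in the kernel of substitution
  have hker : I ≤ RingHom.ker φ.toRingHom := by
    rw [hI, Ideal.span_le]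
    rintro _ ⟨α, rfl⟩
    exact hcon α
  -- the class of X i is integral over ℂ
  set x := Ideal.Quotient.mkₐ ℂ I (MvPowerSeries.X i) with hx
  have hint : IsIntegral ℂ x := IsIntegral.of_finite ℂ x
  obtain ⟨p, hmonic, hroot⟩ := hint
  have hmem : Polynomial.aeval (MvPowerSeries.X i : MvPowerSeries (Fin n') ℂ) p ∈ I := by
    have : Ideal.Quotient.mkₐ ℂ I (Polynomial.aeval (MvPowerSeries.X i) p) = 0 := by
      rw [← Polynomial.aeval_algHom_apply]
      exact hroot
    rwa [Ideal.Quotient.mkₐ_eq_mk, Ideal.Quotient.eq_zero_iff_mem] at this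
  have hzero : Polynomial.aeval (μ i) p = 0 := by
    have h1 : φ (Polynomial.aeval (MvPowerSeries.X i) p) = 0 := hker hmem
    rw [← Polynomial.aeval_algHom_apply, _root_.substAlgHom_X] at h1
    exact h1
  -- p splits over ℂ; so μ i is a constant, hence 0
  have hsplit : p.Splits := IsAlgClosed.splits p
  have heq := hsplit.eq_prod_roots_of_monic hmonic
  rw [heq] at hzero
  rw [map_multiset_prod, Multiset.map_map] at hzero
  rw [Multiset.prod_eq_zero_iff] at hzero
  obtain ⟨a, _, ha⟩ := Multiset.mem_map.mp hzero
  simp only [Function.comp_apply, map_sub, Polynomial.aeval_X, Polynomial.aeval_C] at ha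
  have hμi : μ i = algebraMap ℂ (MvPowerSeries Unit ℂ) a := by
    have := sub_eq_zero.mp ha
    exact this
  have ha0 : a = 0 := by
    have := hμ0 i
    rw [hμi, ← MvPowerSeries.c_eq_algebraMap, MvPowerSeries.constantCoeff_C] at this
    exact this
  rw [ha0, map_zero] at hμi
  exact hi hμi
end
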